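/- For κ > 0 set r₀(κ) := √(1+κ²) − κ ∈ (0,1). Then for every κ > 0 the quantity κ²r² − (1−r²)²/4 is strictly positive for r ∈ (r₀(κ), 1), the improper integral h(κ) := ∫_{r₀(κ)}^{1} dr / √(κ²r² − (1−r²)²/4) converges, and the function κ ↦ h(κ) is a bijection from (0, ∞) onto (0, π/2). -/

import Mathlib

open Set MeasureTheory

/-- The half-height of the vertical catenoid with flux parameter κ. -/
noncomputable def catenoidHalfHeight (κ : ℝ) : ℝ :=
  ∫ r in Set.Ioo (Real.sqrt (1 + κ ^ 2) - κ) 1,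
    1 / Real.sqrt (κ ^ 2 * r ^ 2 - (1 - r ^ 2) ^ 2 / 4)

namespace CatenoidAux

lemma A_sq (κ s : ℝ) : Real.sqrt (1 + κ ^ 2 * s ^ 2) ^ 2 = 1 + κ ^ 2 * s ^ 2 :=
  Real.sq_sqrt (by positivity)

lemma A_pos (κ s : ℝ) : 0 < Real.sqrt (1 + κ ^ 2 * s ^ 2) :=
  Real.sqrt_pos.2 (by positivity)

lemma kmul_lt_A (κ s : ℝ) : κ * s < Real.sqrt (1 + κ ^ 2 * s ^ 2) := by
  nlinarith [A_sq κ s, A_pos κ s]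

lemma key_anti {κ : ℝ} (hκ : 0 < κ) {s t : ℝ} (hs : 0 ≤ s) (hst : s < t) :
    Real.sqrt (1 + κ ^ 2 * t ^ 2) - κ * t < Real.sqrt (1 + κ ^ 2 * s ^ 2) - κ * s := by
  have hA := A_sq κ s
  have hB := A_sq κ t
  have h1 := kmul_lt_A κ s
  have h2 := kmul_lt_A κ t
  have hApos := A_pos κ s
  have hBpos := A_pos κ t
  have hsum : κ * (s + t) < Real.sqrt (1 + κ ^ 2 * s ^ 2) + Real.sqrt (1 + κ ^ 2 * t ^ 2) := by
    nlinarith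
  nlinarith [mul_pos (sub_pos.2 hst) (by linarith :
    (0:ℝ) < Real.sqrt (1 + κ ^ 2 * s ^ 2) + Real.sqrt (1 + κ ^ 2 * t ^ 2) - κ * (s + t))]

/-- The substitution map `φ ↦ √(1+κ²sin²φ) − κ sin φ`. -/
noncomputable def gmap (κ φ : ℝ) : ℝ :=
  Real.sqrt (1 + κ ^ 2 * Real.sin φ ^ 2) - κ * Real.sin φ

lemma gmap_continuous (κ : ℝ) : Continuous (gmap κ) := by
  unfold gmap
  exact (Real.continuous_sqrt.comp (by continuity)).sub (by continuity)

lemma gmap_zero (κ : ℝ) : gmap κ 0 = 1 := by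
  simp [gmap]

lemma gmap_pi_div_two (κ : ℝ) : gmap κ (Real.pi / 2) = Real.sqrt (1 + κ ^ 2) - κ := by
  simp [gmap]

lemma gmap_strictAntiOn {κ : ℝ} (hκ : 0 < κ) :
    StrictAntiOn (gmap κ) (Icc 0 (Real.pi / 2)) := by
  intro x hx y hy hxy
  have hπ := Real.pi_pos
  have hsx : Real.sin x < Real.sin y :=
    Real.strictMonoOn_sin ⟨by linarith [hx.1], by linarith [hx.2]⟩
      ⟨by linarith [hy.1], by linarith [hy.2]⟩ hxy
  have h0 : 0 ≤ Real.sin x := Real.sin_nonneg_of_nonneg_of_le_pi hx.1 (by linarith [hx.2])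
  exact key_anti hκ h0 hsx

lemma gmap_mem {κ : ℝ} (hκ : 0 < κ) {φ : ℝ} (hφ : φ ∈ Ioo 0 (Real.pi / 2)) :
    gmap κ φ ∈ Ioo (Real.sqrt (1 + κ ^ 2) - κ) 1 := by
  have hπ := Real.pi_pos
  have h1 : gmap κ (Real.pi / 2) < gmap κ φ :=
    gmap_strictAntiOn hκ ⟨hφ.1.le, hφ.2.le⟩ ⟨by linarith, le_refl _⟩ hφ.2
  have h2 : gmap κ φ < gmap κ 0 :=
    gmap_strictAntiOn hκ ⟨le_refl _, by linarith⟩ ⟨hφ.1.le, hφ.2.le⟩ hφ.1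
  rw [gmap_zero] at h2
  rw [gmap_pi_div_two] at h1
  exact ⟨h1, h2⟩

lemma gmap_image {κ : ℝ} (hκ : 0 < κ) :
    gmap κ '' Ioo 0 (Real.pi / 2) = Ioo (Real.sqrt (1 + κ ^ 2) - κ) 1 := by
  apply Subset.antisymm
  · rintro _ ⟨φ, hφ, rfl⟩
    exact gmap_mem hκ hφ
  · have h := intermediate_value_Ioo' (by positivity : (0:ℝ) ≤ Real.pi / 2)
      ((gmap_continuous κ).continuousOn (s := Icc 0 (Real.pi / 2)))
    rw [gmap_zero, gmap_pi_div_two] at h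
    exact h

lemma gmap_injOn {κ : ℝ} (hκ : 0 < κ) : InjOn (gmap κ) (Ioo 0 (Real.pi / 2)) :=
  ((gmap_strictAntiOn hκ).injOn).mono Ioo_subset_Icc_self

/-- Derivative of `gmap`. -/
noncomputable def gder (κ φ : ℝ) : ℝ :=
  κ ^ 2 * (2 * Real.sin φ * Real.cos φ) / (2 * Real.sqrt (1 + κ ^ 2 * Real.sin φ ^ 2)) -
    κ * Real.cos φ

lemma gmap_hasDerivAt (κ φ : ℝ) : HasDerivAt (gmap κ) (gder κ φ) φ := by
  have h0 : (0:ℝ) < 1 + κ ^ 2 * Real.sin φ ^ 2 := by positivity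
  have h1 : HasDerivAt (fun φ : ℝ => 1 + κ ^ 2 * Real.sin φ ^ 2)
      (κ ^ 2 * (2 * Real.sin φ * Real.cos φ)) φ := by
    have : HasDerivAt (fun x : ℝ => 1 + κ ^ 2 * Real.sin x ^ 2)
        (κ ^ 2 * (((2 : ℕ) : ℝ) * Real.sin φ ^ (2 - 1) * Real.cos φ)) φ :=
      (((Real.hasDerivAt_sin φ).pow 2).const_mul (κ ^ 2)).const_add 1
    convert this using 1
    ring
  have h2 := h1.sqrt h0.ne'
  have h3 := (Real.hasDerivAt_sin φ).const_mul κ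
  exact h2.sub h3

lemma key_identity {κ : ℝ} (hκ : 0 < κ) {φ : ℝ} (hφ : φ ∈ Ioo 0 (Real.pi / 2)) :
    |gder κ φ| * (1 / Real.sqrt (κ ^ 2 * gmap κ φ ^ 2 - (1 - gmap κ φ ^ 2) ^ 2 / 4)) =
      1 / Real.sqrt (1 + κ ^ 2 * Real.sin φ ^ 2) := by
  have hπ := Real.pi_pos
  set s := Real.sin φ with hs_def
  set c := Real.cos φ with hc_def
  set A := Real.sqrt (1 + κ ^ 2 * s ^ 2) with hA_def
  have hs : 0 < s := Real.sin_pos_of_pos_of_lt_pi hφ.1 (by linarith [hφ.2])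
  have hc : 0 < c := Real.cos_pos_of_mem_Ioo ⟨by linarith [hφ.1], hφ.2⟩
  have hA : A ^ 2 = 1 + κ ^ 2 * s ^ 2 := A_sq κ s
  have hA0 : 0 < A := A_pos κ s
  have hks : κ * s < A := kmul_lt_A κ s
  have hg : gmap κ φ = A - κ * s := rfl
  have hgpos : 0 < A - κ * s := by linarith
  have hcs : c ^ 2 = 1 - s ^ 2 := by
    have := Real.sin_sq_add_cos_sq φ
    rw [← hs_def, ← hc_def] at this
    linarith
  have hsq : κ ^ 2 * gmap κ φ ^ 2 - (1 - gmap κ φ ^ 2) ^ 2 / 4 =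
      (κ * (A - κ * s) * c) ^ 2 := by
    rw [hg]
    have h1 : 1 - (A - κ * s) ^ 2 = 2 * κ * s * (A - κ * s) := by linear_combination -hA
    linear_combination (-(1 - (A - κ*s) ^ 2 + 2 * κ * s * (A - κ*s)) / 4) * h1 -
      κ ^ 2 * (A - κ*s) ^ 2 * hcs
  have hsqrt : Real.sqrt (κ ^ 2 * gmap κ φ ^ 2 - (1 - gmap κ φ ^ 2) ^ 2 / 4) =
      κ * (A - κ * s) * c := by
    rw [hsq]
    exact Real.sqrt_sq (by positivity)
  have hgder : gder κ φ = -(κ * c * (A - κ * s) / A) := by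
    unfold gder
    rw [← hs_def, ← hc_def, ← hA_def]
    field_simp
    ring
  rw [hsqrt, hgder, abs_neg, abs_of_pos (by positivity)]
  field_simp

/-- The expression under the square root is positive on the interval. -/
lemma integrand_pos {κ : ℝ} (hκ : 0 < κ) {r : ℝ}
    (hr : r ∈ Ioo (Real.sqrt (1 + κ ^ 2) - κ) 1) :
    0 < κ ^ 2 * r ^ 2 - (1 - r ^ 2) ^ 2 / 4 := by
  have h1 : Real.sqrt (1 + κ ^ 2) ^ 2 = 1 + κ ^ 2 := Real.sq_sqrt (by positivity)
  have h2 : 0 < Real.sqrt (1 + κ ^ 2) := Real.sqrt_pos.2 (by positivity)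
  have hr0 : 0 < r := by nlinarith [hr.1]
  have h3 : Real.sqrt (1 + κ ^ 2) < r + κ := by linarith [hr.1]
  have hfac1 : 0 < r ^ 2 + 2 * κ * r - 1 := by nlinarith
  have hfac2 : 0 < 2 * κ * r + 1 - r ^ 2 := by nlinarith [hr.2]
  nlinarith [mul_pos hfac1 hfac2]

lemma r0_mem {κ : ℝ} (hκ : 0 < κ) :
    Real.sqrt (1 + κ ^ 2) - κ ∈ Ioo (0:ℝ) 1 := by
  have h1 : Real.sqrt (1 + κ ^ 2) ^ 2 = 1 + κ ^ 2 := Real.sq_sqrt (by positivity)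
  have h2 : 0 < Real.sqrt (1 + κ ^ 2) := Real.sqrt_pos.2 (by positivity)
  constructor
  · nlinarith
  · nlinarith

/-- The base integrand `1/√(1+κ²sin²φ)`. -/
noncomputable def base (κ φ : ℝ) : ℝ := 1 / Real.sqrt (1 + κ ^ 2 * Real.sin φ ^ 2)

lemma base_cont2 : Continuous (Function.uncurry base) := by
  apply Continuous.div continuous_const
  · apply Real.continuous_sqrt.comp
    fun_prop
  · intro p
    exact (Real.sqrt_pos.2 (by positivity)).ne'

lemma base_cont (κ : ℝ) : Continuous (base κ) := by
  apply Continuous.div continuous_const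
  · apply Real.continuous_sqrt.comp
    fun_prop
  · intro φ
    exact (Real.sqrt_pos.2 (by positivity)).ne'

lemma base_le_one (κ φ : ℝ) : base κ φ ≤ 1 := by
  unfold base
  rw [div_le_one (Real.sqrt_pos.2 (by positivity))]
  have : (1:ℝ) = Real.sqrt 1 := Real.sqrt_one.symm
  rw [this]
  exact Real.sqrt_le_sqrt (by nlinarith [sq_nonneg (κ * Real.sin φ)])

lemma base_pos (κ φ : ℝ) : 0 < base κ φ :=
  div_pos one_pos (Real.sqrt_pos.2 (by positivity))

/-- The integrand is integrable on the image interval. -/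
lemma integrableOn_target {κ : ℝ} (hκ : 0 < κ) :
    IntegrableOn (fun r => 1 / Real.sqrt (κ ^ 2 * r ^ 2 - (1 - r ^ 2) ^ 2 / 4))
      (Ioo (Real.sqrt (1 + κ ^ 2) - κ) 1) volume := by
  rw [← gmap_image hκ,
    integrableOn_image_iff_integrableOn_abs_deriv_smul measurableSet_Ioo
      (fun φ _ => (gmap_hasDerivAt κ φ).hasDerivWithinAt) (gmap_injOn hκ)]
  have hbase : IntegrableOn (base κ) (Ioo 0 (Real.pi / 2)) volume :=
    ((base_cont κ).integrableOn_Icc).mono_set Ioo_subset_Icc_self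
  apply hbase.congr_fun _ measurableSet_Ioo
  intro φ hφ
  have := key_identity hκ hφ
  simp only [smul_eq_mul]
  unfold base
  exact this.symm

/-- `Hfun κ` is the integral of the base integrand. -/
noncomputable def Hfun (κ : ℝ) : ℝ := ∫ φ in (0:ℝ)..(Real.pi / 2), base κ φ

lemma Hfun_eq_setIntegral (κ : ℝ) : Hfun κ = ∫ φ in Ioo 0 (Real.pi / 2), base κ φ := by
  rw [Hfun, intervalIntegral.integral_of_le (by positivity), integral_Ioc_eq_integral_Ioo]

/-- Change of variables: the catenoid half-height equals `Hfun κ`. -/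
lemma cov {κ : ℝ} (hκ : 0 < κ) : catenoidHalfHeight κ = Hfun κ := by
  rw [Hfun_eq_setIntegral]
  unfold catenoidHalfHeight
  rw [← gmap_image hκ,
    integral_image_eq_integral_abs_deriv_smul measurableSet_Ioo
      (fun φ _ => (gmap_hasDerivAt κ φ).hasDerivWithinAt) (gmap_injOn hκ)]
  apply setIntegral_congr_fun measurableSet_Ioo
  intro φ hφ
  have := key_identity hκ hφ
  simp only [smul_eq_mul]
  rw [this]
  rfl

lemma Hfun_continuous : Continuous Hfun :=
  intervalIntegral.continuous_parametric_intervalIntegral_of_continuous' base_cont2 0 (Real.pi/2)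

lemma Hfun_zero : Hfun 0 = Real.pi / 2 := by
  simp [Hfun, base]

lemma Hfun_pos (κ : ℝ) : 0 < Hfun κ := by
  apply intervalIntegral.intervalIntegral_pos_of_pos_on
    ((base_cont κ).intervalIntegrable _ _)
  · exact fun x _ => base_pos κ x
  · positivity

lemma Hfun_strictAntiOn : StrictAntiOn Hfun (Ici 0) := by
  intro a ha b hb hab
  have hgt : ∀ x ∈ Ioo (0:ℝ) (Real.pi / 2), 0 < base a x - base b x := by
    intro x hx
    have hπ := Real.pi_pos
    have hsx : 0 < Real.sin x := Real.sin_pos_of_pos_of_lt_pi hx.1 (by linarith [hx.2])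
    have h1 : 1 + a ^ 2 * Real.sin x ^ 2 < 1 + b ^ 2 * Real.sin x ^ 2 := by
      have h : a ^ 2 < b ^ 2 := by nlinarith [mem_Ici.1 ha]
      have := mul_lt_mul_of_pos_right h (pow_pos hsx 2)
      linarith
    have h2 : Real.sqrt (1 + a ^ 2 * Real.sin x ^ 2) < Real.sqrt (1 + b ^ 2 * Real.sin x ^ 2) :=
      Real.sqrt_lt_sqrt (by positivity) h1
    have := one_div_lt_one_div_of_lt (Real.sqrt_pos.2 (by positivity)) h2
    unfold base
    linarith
  have hpos : 0 < ∫ x in (0:ℝ)..(Real.pi / 2), (base a x - base b x) := by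
    apply intervalIntegral.intervalIntegral_pos_of_pos_on
      (((base_cont a).sub (base_cont b)).intervalIntegrable _ _) hgt (by positivity)
  have hsub : (∫ x in (0:ℝ)..(Real.pi / 2), (base a x - base b x)) = Hfun a - Hfun b :=
    intervalIntegral.integral_sub ((base_cont a).intervalIntegrable _ _)
      ((base_cont b).intervalIntegrable _ _)
  linarith [hsub ▸ hpos]

lemma exists_small {y : ℝ} (hy : 0 < y) : ∃ κ : ℝ, 0 < κ ∧ Hfun κ < y := by
  have hπ := Real.pi_pos
  set δ : ℝ := min (y / 2) (Real.pi / 4) with hδ_def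
  have hδ0 : 0 < δ := lt_min (by linarith) (by linarith)
  have hδπ : δ < Real.pi / 2 := lt_of_le_of_lt (min_le_right _ _) (by linarith)
  have hδy : δ ≤ y / 2 := min_le_left _ _
  have hsδ : 0 < Real.sin δ := Real.sin_pos_of_pos_of_lt_pi hδ0 (by linarith)
  set κ : ℝ := Real.pi / (y * Real.sin δ) + 1 with hκ_def
  have hκpos : 0 < κ := by positivity
  refine ⟨κ, hκpos, ?_⟩
  have hsplit : Hfun κ = (∫ φ in (0:ℝ)..δ, base κ φ) + ∫ φ in δ..(Real.pi / 2), base κ φ := by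
    rw [Hfun, ← intervalIntegral.integral_add_adjacent_intervals
      ((base_cont κ).intervalIntegrable _ _) ((base_cont κ).intervalIntegrable _ _)]
  have hb1 : (∫ φ in (0:ℝ)..δ, base κ φ) ≤ δ := by
    have := intervalIntegral.integral_mono_on hδ0.le
      ((base_cont κ).intervalIntegrable _ _)
      (intervalIntegrable_const (μ := volume) (c := (1:ℝ)))
      (fun x _ => base_le_one κ x)
    simpa using this
  have hb2 : (∫ φ in δ..(Real.pi / 2), base κ φ) ≤ (Real.pi / 2 - δ) * base κ δ := by
    have hmono : ∀ x ∈ Icc δ (Real.pi / 2), base κ x ≤ base κ δ := by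
      intro x hx
      have hsx : Real.sin δ ≤ Real.sin x := by
        apply Real.strictMonoOn_sin.monotoneOn ⟨by linarith, by linarith⟩
          ⟨by linarith [hx.1], hx.2⟩ hx.1
      unfold base
      apply one_div_le_one_div_of_le (Real.sqrt_pos.2 (by positivity))
      apply Real.sqrt_le_sqrt
      have h := pow_le_pow_left₀ hsδ.le hsx 2
      have := mul_le_mul_of_nonneg_left h (sq_nonneg κ)
      linarith
    have := intervalIntegral.integral_mono_on hδπ.le
      ((base_cont κ).intervalIntegrable _ _)
      (intervalIntegrable_const (μ := volume) (c := base κ δ)) hmono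
    simpa [smul_eq_mul] using this
  have hbase : base κ δ ≤ 1 / (κ * Real.sin δ) := by
    unfold base
    apply one_div_le_one_div_of_le (by positivity)
    have : κ * Real.sin δ = Real.sqrt ((κ * Real.sin δ) ^ 2) :=
      (Real.sqrt_sq (by positivity)).symm
    rw [this]
    apply Real.sqrt_le_sqrt
    nlinarith
  have hκs : Real.pi / y < κ * Real.sin δ := by
    have : κ * Real.sin δ = Real.pi / y + Real.sin δ := by
      rw [hκ_def]
      field_simp
    rw [this]
    linarith
  have hlast : (Real.pi / 2 - δ) * base κ δ < y / 2 := by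
    have h1 : base κ δ ≤ 1 / (κ * Real.sin δ) := hbase
    have h2 : 1 / (κ * Real.sin δ) < y / Real.pi := by
      rw [div_lt_div_iff₀ (by positivity) hπ]
      have := (div_lt_iff₀ hy).1 hκs
      nlinarith
    have h3 : base κ δ < y / Real.pi := lt_of_le_of_lt h1 h2
    have h4 : 0 < base κ δ := base_pos κ δ
    have h5 : (Real.pi / 2 - δ) * base κ δ ≤ (Real.pi / 2) * base κ δ := by nlinarith
    have h6 : (Real.pi / 2) * base κ δ < (Real.pi / 2) * (y / Real.pi) := by nlinarith
    have : (Real.pi / 2) * (y / Real.pi) = y / 2 := by field_simp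
    linarith
  linarith [hsplit, hb1, hb2, hlast]

end CatenoidAux

open CatenoidAux in
/-- The correspondence between the flux parameter κ and the half-height h of
the vertical catenoid is a bijection from (0,∞) onto (0, π/2). -/
theorem catenoid_height_bijection :
    (∀ κ : ℝ, 0 < κ →
      (Real.sqrt (1 + κ ^ 2) - κ ∈ Set.Ioo (0 : ℝ) 1) ∧
      (∀ r ∈ Set.Ioo (Real.sqrt (1 + κ ^ 2) - κ) 1,
        0 < κ ^ 2 * r ^ 2 - (1 - r ^ 2) ^ 2 / 4) ∧
      IntegrableOn (fun r => 1 / Real.sqrt (κ ^ 2 * r ^ 2 - (1 - r ^ 2) ^ 2 / 4))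
        (Set.Ioo (Real.sqrt (1 + κ ^ 2) - κ) 1) volume) ∧
    Set.BijOn catenoidHalfHeight (Set.Ioi 0) (Set.Ioo 0 (Real.pi / 2)) := by
  have hkey : ∀ κ : ℝ, 0 < κ → catenoidHalfHeight κ = Hfun κ := fun κ hκ => cov hκ
  constructor
  · intro κ hκ
    exact ⟨r0_mem hκ, fun r hr => integrand_pos hκ hr, integrableOn_target hκ⟩
  · refine ⟨?_, ?_, ?_⟩
    · intro κ hκ
      rw [mem_Ioi] at hκ
      rw [mem_Ioo, hkey κ hκ]
      refine ⟨Hfun_pos κ, ?_⟩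
      have := Hfun_strictAntiOn (mem_Ici.2 le_rfl) (mem_Ici.2 hκ.le) hκ
      rw [Hfun_zero] at this
      exact this
    · intro a ha b hb hab
      rw [mem_Ioi] at ha hb
      rw [hkey a ha, hkey b hb] at hab
      exact Hfun_strictAntiOn.injOn (mem_Ici.2 ha.le) (mem_Ici.2 hb.le) hab
    · intro y hy
      obtain ⟨κ₁, hκ₁, hH⟩ := exists_small hy.1
      have hIVT := intermediate_value_Icc' hκ₁.le Hfun_continuous.continuousOn
      have hyIcc : y ∈ Icc (Hfun κ₁) (Hfun 0) := ⟨hH.le, by rw [Hfun_zero]; exact hy.2.le⟩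
      obtain ⟨κ, hκmem, hκy⟩ := hIVT hyIcc
      have hκ0 : 0 < κ := by
        rcases eq_or_lt_of_le hκmem.1 with h | h
        · exfalso
          rw [← h, Hfun_zero] at hκy
          exact hy.2.ne hκy.symm
        · exact h
      exact ⟨κ, mem_Ioi.2 hκ0, by rw [hkey κ hκ0, hκy]⟩
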